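/- Let q : ℝ → ℝ be twice differentiable and satisfy the Painlevé II equation q''(s) = 2 q(s)³ + s q(s) for all s ∈ ℝ. Assume that q² is integrable on [s₀, ∞) for some s₀ and that q'(s)² − s q(s)² − q(s)⁴ → 0 as s → +∞. Then for every s ∈ ℝ, ∫_s^∞ q(t)² dt = q'(s)² − s q(s)² − q(s)⁴. -/

import Mathlib

open MeasureTheory Filter

/-- if `q` solves Painlevé II, `q²` is integrable at `+∞` and
`R(s) = q'(s)² - s q(s)² - q(s)⁴ → 0` as `s → +∞`, then
`∫_s^∞ q(t)² dt = q'(s)² - s q(s)² - q(s)⁴` for every `s`. -/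
theorem painleveII_tail_integral (q q' : ℝ → ℝ)
    (hq : ∀ s, HasDerivAt q (q' s) s)
    (hq' : ∀ s, HasDerivAt q' (2 * q s ^ 3 + s * q s) s)
    (s₀ : ℝ) (hint : IntegrableOn (fun u => q u ^ 2) (Set.Ici s₀))
    (hlim : Tendsto (fun s => q' s ^ 2 - s * q s ^ 2 - q s ^ 4) atTop (nhds 0)) :
    ∀ s : ℝ, ∫ u in Set.Ioi s, q u ^ 2 = q' s ^ 2 - s * q s ^ 2 - q s ^ 4 := by
  set R : ℝ → ℝ := fun s => q' s ^ 2 - s * q s ^ 2 - q s ^ 4 with hR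
  have hcq : Continuous q := continuous_iff_continuousAt.mpr fun s => (hq s).continuousAt
  have hRd : ∀ s, HasDerivAt R (-(q s ^ 2)) s := by
    intro s
    have h1 : HasDerivAt (fun s => q' s ^ 2 - s * q s ^ 2 - q s ^ 4)
        (2 * q' s * (2 * q s ^ 3 + s * q s)
          - (1 * q s ^ 2 + s * (2 * q s * q' s)) - 4 * q s ^ 3 * q' s) s := by
      have := (((hq' s).fun_pow 2).fun_sub ((hasDerivAt_id s).fun_mul ((hq s).fun_pow 2))).fun_sub ((hq s).fun_pow 4)
      simp only [id_eq] at this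
      refine this.congr_deriv ?_
      push_cast
      ring
    convert h1 using 1
    ring
  -- integrability on Ioi s for any s
  have hint' : ∀ s : ℝ, IntegrableOn (fun u => q u ^ 2) (Set.Ioi s) := by
    intro s
    have h1 : IntegrableOn (fun u => q u ^ 2) (Set.Icc s s₀) :=
      (hcq.pow 2).continuousOn.integrableOn_compact isCompact_Icc
    have h2 : Set.Ioi s ⊆ Set.Icc s s₀ ∪ Set.Ici s₀ := by
      intro x hx
      rcases le_total x s₀ with h | h
      · exact Or.inl ⟨le_of_lt hx, h⟩
      · exact Or.inr h
    exact (h1.union hint).mono_set h2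
  intro s
  have key : ∀ b : ℝ, s ≤ b → ∫ u in s..b, q u ^ 2 = R s - R b := by
    intro b hb
    have := intervalIntegral.integral_eq_sub_of_hasDerivAt
      (f := R) (f' := fun u => -(q u ^ 2)) (a := s) (b := b)
      (fun x _ => hRd x)
      (((hcq.pow 2).neg.intervalIntegrable s b))
    have h2 : ∫ u in s..b, -(q u ^ 2) = -(∫ u in s..b, q u ^ 2) :=
      intervalIntegral.integral_neg
    rw [h2] at this
    linarith
  have hten : Tendsto (fun b => ∫ u in s..b, q u ^ 2) atTop
      (nhds (∫ u in Set.Ioi s, q u ^ 2)) :=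
    intervalIntegral_tendsto_integral_Ioi s (hint' s) tendsto_id
  have hten2 : Tendsto (fun b => R s - R b) atTop (nhds (R s - 0)) :=
    tendsto_const_nhds.sub hlim
  have heq : (fun b => ∫ u in s..b, q u ^ 2) =ᶠ[atTop] (fun b => R s - R b) :=
    (eventually_ge_atTop s).mono fun b hb => key b hb
  have := tendsto_nhds_unique (hten.congr' heq) hten2
  rw [this]; ring
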